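/- There is a bijection between the set of chambers of the (essentialized) semiorder arrangement B in H_0 ⊂ R^m and the set of semiorders on {1, ..., m}, given by sending a chamber b to the partial order ⪰ defined by i ≻ j ⟺ x_i > x_j + 1 for any point (x_1, ..., x_m) ∈ b. -/

import Mathlib

open Set

/-- Connected components of `F` (chambers of the arrangement with complement `F`). -/
def chambersOf {X : Type*} [TopologicalSpace X] (F : Set X) : Set (Set X) :=
  {c | ∃ x ∈ F, c = connectedComponentIn F x}

/-- The complement, inside `H₀`, of the essentialized semiorder arrangement
(hyperplanes `xᵢ = xⱼ + 1`, `i ≠ j`). -/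
def semiorderComplement (m : ℕ) : Set (Fin m → ℝ) :=
  {x | ∑ i, x i = 0 ∧ ∀ i j : Fin m, i ≠ j → x i ≠ x j + 1}

/-- `r` is (the strict order of) a semiorder: an irreflexive transitive relation with
no induced `2+2` and no induced `3+1`. -/
def IsSemiorder {α : Type*} (r : α → α → Prop) : Prop :=
  (∀ a, ¬r a a) ∧ (∀ a b c, r a b → r b c → r a c) ∧
  (∀ a b c d, r a b → r c d → r a d ∨ r c b) ∧
  (∀ a b c d, r a b → r b c → r a d ∨ r d c)

/-- The trace (weak order) associated to `r`: `i` is at least as high as `j`. -/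
def trge {α : Type*} (r : α → α → Prop) (i j : α) : Prop :=
  ∀ k, (r j k → r i k) ∧ (r k i → r k j)

lemma trge_refl {α : Type*} (r : α → α → Prop) (i : α) : trge r i i :=
  fun _ => ⟨id, id⟩

lemma trge_trans {α : Type*} {r : α → α → Prop} {i j k : α}
    (h1 : trge r i j) (h2 : trge r j k) : trge r i k :=
  fun l => ⟨fun h => (h1 l).1 ((h2 l).1 h), fun h => (h2 l).2 ((h1 l).2 h)⟩

lemma trge_total {α : Type*} {r : α → α → Prop} (hr : IsSemiorder r) {i j : α}
    (h : ¬ trge r i j) : trge r j i := by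
  obtain ⟨h0, h2, h3, h4⟩ := hr
  have hw : ∃ k, (r j k ∧ ¬ r i k) ∨ (r k i ∧ ¬ r k j) := by
    by_contra hc
    push_neg at hc
    exact h (fun k => ⟨(hc k).1, (hc k).2⟩)
  obtain ⟨k, hk | hk⟩ := hw
  · intro l
    exact ⟨fun hil => (h3 j k i l hk.1 hil).resolve_right hk.2,
           fun hlj => (h4 l j k i hlj hk.1).resolve_right hk.2⟩
  · intro l
    exact ⟨fun hil => (h4 k i l j hk.1 hil).resolve_left hk.2,
           fun hlj => (h3 l j k i hlj hk.1).resolve_right hk.2⟩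

lemma exists_trge_max {m : ℕ} {r : Fin m → Fin m → Prop} (hr : IsSemiorder r)
    (s : Finset (Fin m)) : s.Nonempty → ∃ a ∈ s, ∀ j ∈ s, trge r a j := by
  classical
  induction s using Finset.induction_on with
  | empty => intro h; simp at h
  | @insert a t hat IH =>
    intro _
    rcases t.eq_empty_or_nonempty with rfl | ht
    · exact ⟨a, by simp, by simp [trge_refl]⟩
    · obtain ⟨b, hb, hbmax⟩ := IH ht
      by_cases htab : trge r a b
      · refine ⟨a, Finset.mem_insert_self a t, fun j hj => ?_⟩
        rcases Finset.mem_insert.1 hj with rfl | hj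
        · exact trge_refl r j
        · exact trge_trans htab (hbmax j hj)
      · refine ⟨b, Finset.mem_insert_of_mem hb, fun j hj => ?_⟩
        rcases Finset.mem_insert.1 hj with rfl | hj
        · exact trge_total hr htab
        · exact hbmax j hj

lemma exists_between'' (L U : Finset ℝ) (h : ∀ l ∈ L, ∀ u ∈ U, l < u) :
    ∃ v : ℝ, (∀ l ∈ L, l < v) ∧ (∀ u ∈ U, v < u) := by
  rcases L.eq_empty_or_nonempty with hL | hL
  · rcases U.eq_empty_or_nonempty with hU | hU
    · exact ⟨0, by simp [hL], by simp [hU]⟩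
    · exact ⟨U.min' hU - 1, by simp [hL], fun u hu => by
        have := U.min'_le u hu; linarith⟩
  · rcases U.eq_empty_or_nonempty with hU | hU
    · exact ⟨L.max' hL + 1, fun l hl => by have := L.le_max' l hl; linarith,
        by simp [hU]⟩
    · have hlu := h (L.max' hL) (L.max'_mem hL) (U.min' hU) (U.min'_mem hU)
      refine ⟨(L.max' hL + U.min' hU) / 2, fun l hl => ?_, fun u hu => ?_⟩
      · have := L.le_max' l hl; linarith
      · have := U.min'_le u hu; linarith

/-- Finite Scott–Suppes representation theorem, with a trace-monotonicity strengthening. -/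
lemma rep_lemma {m : ℕ} {r : Fin m → Fin m → Prop} (hr : IsSemiorder r) (s : Finset (Fin m)) :
    ∃ x : Fin m → ℝ,
      (∀ i ∈ s, ∀ j ∈ s, (r i j → x j + 1 < x i) ∧ (¬ r i j → x i < x j + 1)) ∧
      (∀ i ∈ s, ∀ j ∈ s, ¬ trge r i j → x i < x j) := by
  classical
  induction s using Finset.strongInductionOn with
  | _ s IH =>
  rcases s.eq_empty_or_nonempty with rfl | hs
  · exact ⟨0, by simp, by simp⟩
  obtain ⟨a, ha, hmax⟩ := exists_trge_max hr s hs
  obtain ⟨x, hx1, hx2⟩ := IH (s.erase a) (Finset.erase_ssubset ha)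
  set e := s.erase a with he
  have hes : ∀ j ∈ e, j ∈ s := fun j hj => Finset.mem_of_mem_erase hj
  set L : Finset ℝ := ((e.filter (fun j => r a j)).image (fun j => x j + 1)) ∪
      (e.image (fun j => x j - 1)) ∪
      ((e.filter (fun j => ¬ trge r j a)).image x) with hL
  set U : Finset ℝ := (e.filter (fun k => ¬ r a k)).image (fun k => x k + 1) with hU
  have hLU : ∀ l ∈ L, ∀ u ∈ U, l < u := by
    intro l hl u hu
    simp only [hL, hU, Finset.mem_union, Finset.mem_image, Finset.mem_filter] at hl hu
    obtain ⟨k, ⟨hke, hknr⟩, rfl⟩ := hu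
    rcases hl with (⟨j, ⟨hje, hjr⟩, rfl⟩ | ⟨j, hje, rfl⟩) | ⟨j, ⟨hje, hjt⟩, rfl⟩
    · -- x j + 1 < x k + 1 from strict trace
      have hnt : ¬ trge r j k := fun ht => hknr ((ht a).2 hjr)
      have := hx2 j hje k hke hnt
      linarith
    · -- x j - 1 < x k + 1
      by_cases hjk : r j k
      · exact absurd (((hmax j (hes j hje)) k).1 hjk) hknr
      · have := (hx1 j hje k hke).2 hjk; linarith
    · -- x j < x k + 1
      by_cases hjk : r j k
      · exact absurd (((hmax j (hes j hje)) k).1 hjk) hknr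
      · have := (hx1 j hje k hke).2 hjk; linarith
  obtain ⟨v, hvL, hvU⟩ := exists_between'' L U hLU
  have key1 : ∀ j ∈ e, r a j → x j + 1 < v := by
    intro j hj hrj
    exact hvL _ (by
      simp only [hL, Finset.mem_union, Finset.mem_image, Finset.mem_filter]
      exact Or.inl (Or.inl ⟨j, ⟨hj, hrj⟩, rfl⟩))
  have key2 : ∀ j ∈ e, x j - 1 < v := by
    intro j hj
    exact hvL _ (by
      simp only [hL, Finset.mem_union, Finset.mem_image, Finset.mem_filter]
      exact Or.inl (Or.inr ⟨j, hj, rfl⟩))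
  have key3 : ∀ j ∈ e, ¬ trge r j a → x j < v := by
    intro j hj hjt
    exact hvL _ (by
      simp only [hL, Finset.mem_union, Finset.mem_image, Finset.mem_filter]
      exact Or.inr ⟨j, ⟨hj, hjt⟩, rfl⟩)
  have key4 : ∀ k ∈ e, ¬ r a k → v < x k + 1 := by
    intro k hk hknr
    exact hvU _ (by
      simp only [hU, Finset.mem_image, Finset.mem_filter]
      exact ⟨k, ⟨hk, hknr⟩, rfl⟩)
  set y := Function.update x a v with hy
  have hya : y a = v := Function.update_self a v x
  have hyne : ∀ i, i ≠ a → y i = x i := fun i hi => Function.update_of_ne hi v x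
  have hnra : ∀ i ∈ s, ¬ r i a := fun i hi h => hr.1 i (((hmax i hi) i).2 h)
  refine ⟨y, fun i hi j hj => ?_, fun i hi j hj hnt => ?_⟩
  · by_cases hia : i = a <;> by_cases hja : j = a
    · subst hia; subst hja
      exact ⟨fun h => absurd h (hr.1 _), fun _ => by linarith⟩
    · subst hia
      have hje : j ∈ e := Finset.mem_erase.2 ⟨hja, hj⟩
      rw [hya, hyne j hja]
      exact ⟨key1 j hje, key4 j hje⟩
    · subst hja
      have hie : i ∈ e := Finset.mem_erase.2 ⟨hia, hi⟩
      rw [hya, hyne i hia]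
      refine ⟨fun h => absurd h (hnra i hi), fun _ => ?_⟩
      have := key2 i hie; linarith
    · have hie : i ∈ e := Finset.mem_erase.2 ⟨hia, hi⟩
      have hje : j ∈ e := Finset.mem_erase.2 ⟨hja, hj⟩
      rw [hyne i hia, hyne j hja]
      exact hx1 i hie j hje
  · by_cases hia : i = a <;> by_cases hja : j = a
    · subst hia; subst hja; exact absurd (trge_refl r _) hnt
    · subst hia; exact absurd (hmax j hj) hnt
    · subst hja
      have hie : i ∈ e := Finset.mem_erase.2 ⟨hia, hi⟩
      rw [hya, hyne i hia]
      exact key3 i hie hnt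
    · have hie : i ∈ e := Finset.mem_erase.2 ⟨hia, hi⟩
      have hje : j ∈ e := Finset.mem_erase.2 ⟨hja, hj⟩
      rw [hyne i hia, hyne j hja]
      exact hx2 i hie j hje hnt

/-- Sign constancy on connected components. -/
lemma sign_const {m : ℕ} {x₀ y : Fin m → ℝ}
    (hx : x₀ ∈ semiorderComplement m)
    (hy : y ∈ connectedComponentIn (semiorderComplement m) x₀) (i j : Fin m) :
    x₀ j + 1 < x₀ i ↔ y j + 1 < y i := by
  rcases eq_or_ne i j with rfl | hij
  · constructor <;> intro h <;> linarith
  have hbF := connectedComponentIn_subset (semiorderComplement m) x₀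
  have hbx : x₀ ∈ connectedComponentIn (semiorderComplement m) x₀ :=
    mem_connectedComponentIn hx
  have hcont : ContinuousOn (fun z : Fin m → ℝ => z i - z j - 1)
      (connectedComponentIn (semiorderComplement m) x₀) :=
    (((continuous_apply i).sub (continuous_apply j)).sub continuous_const).continuousOn
  have hne : ∀ z ∈ connectedComponentIn (semiorderComplement m) x₀, z i - z j - 1 ≠ 0 := by
    intro z hz h0
    exact (hbF hz).2 i j hij (by linarith)
  constructor
  · intro h
    by_contra hy'
    have h1 : y i - y j - 1 < 0 := lt_of_le_of_ne (by linarith [not_lt.1 hy']) (hne y hy)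
    have h0 : (0:ℝ) ∈ Set.Icc (y i - y j - 1) (x₀ i - x₀ j - 1) := ⟨h1.le, by linarith⟩
    obtain ⟨z, hz, hz0⟩ :=
      (isPreconnected_connectedComponentIn).intermediate_value hy hbx hcont h0
    exact hne z hz hz0
  · intro h
    by_contra hx'
    have h1 : x₀ i - x₀ j - 1 < 0 := lt_of_le_of_ne (by linarith [not_lt.1 hx']) (hne x₀ hbx)
    have h0 : (0:ℝ) ∈ Set.Icc (x₀ i - x₀ j - 1) (y i - y j - 1) := ⟨h1.le, by linarith⟩
    obtain ⟨z, hz, hz0⟩ :=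
      (isPreconnected_connectedComponentIn).intermediate_value hbx hy hcont h0
    exact hne z hz hz0

lemma phi_iff {m : ℕ} {x₀ : Fin m → ℝ} (hx : x₀ ∈ semiorderComplement m) (i j : Fin m) :
    (∃ y ∈ connectedComponentIn (semiorderComplement m) x₀, y i > y j + 1) ↔
      x₀ j + 1 < x₀ i := by
  constructor
  · rintro ⟨y, hy, hgt⟩
    exact (sign_const hx hy i j).2 hgt
  · intro h
    exact ⟨x₀, mem_connectedComponentIn hx, h⟩

lemma isSemiorder_real {m : ℕ} (x : Fin m → ℝ) :
    IsSemiorder (fun i j : Fin m => x j + 1 < x i) := by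
  refine ⟨fun a => by simp, fun a b c h1 h2 => by linarith, ?_, ?_⟩
  · intro a b c d h1 h2
    rcases lt_or_ge (x d + 1) (x a) with h | h
    · exact Or.inl h
    · exact Or.inr (by linarith)
  · intro a b c d h1 h2
    rcases lt_or_ge (x d + 1) (x a) with h | h
    · exact Or.inl h
    · exact Or.inr (by linarith)

lemma isSemiorder_congr {m : ℕ} {r s : Fin m → Fin m → Prop}
    (h : ∀ i j, r i j ↔ s i j) (hs : IsSemiorder s) : IsSemiorder r := by
  have : r = s := funext fun i => funext fun j => propext (h i j)
  rw [this]; exact hs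

lemma convex_comb_lt {a b pj pi qj qi : ℝ} (ha : 0 ≤ a) (hb : 0 ≤ b) (hab : a + b = 1)
    (hp : pj + 1 < pi) (hq : qj + 1 < qi) : (a * pj + b * qj) + 1 < a * pi + b * qi := by
  have h1 : a * (pj + 1) ≤ a * pi := mul_le_mul_of_nonneg_left hp.le ha
  have h2 : b * (qj + 1) ≤ b * qi := mul_le_mul_of_nonneg_left hq.le hb
  have hor : 0 < a ∨ 0 < b := by by_contra hc; push_neg at hc; linarith [hc.1, hc.2]
  rcases hor with h | h
  · have := mul_lt_mul_of_pos_left hp h; nlinarith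
  · have := mul_lt_mul_of_pos_left hq h; nlinarith

lemma convex_comb_lt' {a b pj pi qj qi : ℝ} (ha : 0 ≤ a) (hb : 0 ≤ b) (hab : a + b = 1)
    (hp : pi < pj + 1) (hq : qi < qj + 1) : a * pi + b * qi < (a * pj + b * qj) + 1 := by
  have h1 : a * pi ≤ a * (pj + 1) := mul_le_mul_of_nonneg_left hp.le ha
  have h2 : b * qi ≤ b * (qj + 1) := mul_le_mul_of_nonneg_left hq.le hb
  have hor : 0 < a ∨ 0 < b := by by_contra hc; push_neg at hc; linarith [hc.1, hc.2]
  rcases hor with h | h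
  · have := mul_lt_mul_of_pos_left hp h; nlinarith
  · have := mul_lt_mul_of_pos_left hq h; nlinarith

/-- The map sending a chamber `b` of the semiorder arrangement to the relation
`i ≻ j ⟺ xᵢ > xⱼ + 1` (for any `x ∈ b`) is a bijection onto the set of semiorders on
`{1, …, m}`. -/
theorem semiorder_chamber_bijection (m : ℕ) :
    Set.BijOn (fun b : Set (Fin m → ℝ) => fun i j : Fin m => ∃ x ∈ b, x i > x j + 1)
      (chambersOf (semiorderComplement m))
      {r : Fin m → Fin m → Prop | IsSemiorder r} := by
  refine ⟨?_, ?_, ?_⟩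
  · -- MapsTo
    rintro b ⟨x₀, hx₀, rfl⟩
    exact isSemiorder_congr (fun i j => phi_iff hx₀ i j) (isSemiorder_real x₀)
  · -- InjOn
    rintro b₁ ⟨x₁, hx₁, rfl⟩ b₂ ⟨x₂, hx₂, rfl⟩ heq
    have hpat : ∀ i j, (x₁ j + 1 < x₁ i) ↔ (x₂ j + 1 < x₂ i) := by
      intro i j
      rw [← phi_iff hx₁ i j, ← phi_iff hx₂ i j]
      exact iff_of_eq (congrFun (congrFun heq i) j)
    set S : Set (Fin m → ℝ) := {y | ∑ i, y i = 0 ∧ ∀ i j, ((x₁ j + 1 < x₁ i) → y j + 1 < y i)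
      ∧ (i ≠ j → ¬(x₁ j + 1 < x₁ i) → y i < y j + 1)} with hS
    have hconv : Convex ℝ S := by
      rintro p ⟨hp0, hp⟩ q ⟨hq0, hq⟩ a b ha hb hab
      refine ⟨?_, fun i j => ⟨fun h => ?_, fun hij h => ?_⟩⟩
      · have : ∑ i, (a • p + b • q) i = a * ∑ i, p i + b * ∑ i, q i := by
          simp [Finset.mul_sum, Finset.sum_add_distrib]
        rw [this, hp0, hq0]; ring
      · have h1 := (hp i j).1 h
        have h2 := (hq i j).1 h
        have := convex_comb_lt ha hb hab h1 h2
        simpa [Pi.add_apply, Pi.smul_apply, smul_eq_mul] using this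
      · have h1 := (hp i j).2 hij h
        have h2 := (hq i j).2 hij h
        have := convex_comb_lt' ha hb hab h1 h2
        simpa [Pi.add_apply, Pi.smul_apply, smul_eq_mul] using this
    have hSF : S ⊆ semiorderComplement m := by
      rintro y ⟨hy0, hy⟩
      refine ⟨hy0, fun i j hij heq => ?_⟩
      by_cases hcs : x₁ j + 1 < x₁ i
      · have := (hy i j).1 hcs; linarith
      · have := (hy i j).2 hij hcs; linarith
    have hx₁S : x₁ ∈ S :=
      ⟨hx₁.1, fun i j => ⟨id, fun hij h => lt_of_le_of_ne (not_lt.1 h) (hx₁.2 i j hij)⟩⟩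
    have hx₂S : x₂ ∈ S := by
      refine ⟨hx₂.1, fun i j => ⟨fun h => (hpat i j).1 h, fun hij h => ?_⟩⟩
      have h2 : ¬ (x₂ j + 1 < x₂ i) := fun hlt => h ((hpat i j).2 hlt)
      exact lt_of_le_of_ne (not_lt.1 h2) (hx₂.2 i j hij)
    have hsub := hconv.isPreconnected.subset_connectedComponentIn hx₁S hSF
    exact connectedComponentIn_eq (hsub hx₂S)
  · -- SurjOn
    intro r hrS
    obtain ⟨x, hx1, -⟩ := rep_lemma hrS Finset.univ
    have hx1' : ∀ i j, (r i j → x j + 1 < x i) ∧ (¬ r i j → x i < x j + 1) :=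
      fun i j => hx1 i (Finset.mem_univ i) j (Finset.mem_univ j)
    set c : ℝ := (∑ k, x k) / m with hc
    set x' : Fin m → ℝ := fun i => x i - c with hx'
    have hdiff : ∀ i, x' i = x i - c := fun _ => rfl
    have hsum : ∑ i, x' i = 0 := by
      rcases Nat.eq_zero_or_pos m with hm | hm
      · subst hm; simp
      · have hm' : (m:ℝ) ≠ 0 := Nat.cast_ne_zero.2 hm.ne'
        simp only [hx']
        rw [Finset.sum_sub_distrib, Finset.sum_const, Finset.card_univ, Fintype.card_fin,
          nsmul_eq_mul, hc]
        field_simp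
        ring
    have hx'F : x' ∈ semiorderComplement m := by
      refine ⟨hsum, fun i j hij heq => ?_⟩
      rw [hdiff i, hdiff j] at heq
      by_cases hij' : r i j
      · have := (hx1' i j).1 hij'; linarith
      · have := (hx1' i j).2 hij'; linarith
    refine ⟨connectedComponentIn (semiorderComplement m) x', ⟨x', hx'F, rfl⟩, ?_⟩
    funext i j
    apply propext
    constructor
    · intro h
      have h1 := (phi_iff hx'F i j).1 h
      rw [hdiff i, hdiff j] at h1
      by_contra hn
      have h2 := (hx1' i j).2 hn
      linarith
    · intro h
      refine (phi_iff hx'F i j).2 ?_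
      have := (hx1' i j).1 h
      rw [hdiff i, hdiff j]
      linarith
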